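/- Let (E,T,S,e) be a conditional expectation preserving system with T strictly positive and S surjective, let p be a component of e and n ≥ 1 an integer. Define R_k := ⨆_{i≥k} q(p,i) for k ∈ ℕ and q := ⨆_{j≥0} S^{nj} R_{n(j+1)} (both suprema exist in E, being bounded above by e). Then q is a component of e, the elements S^{nj}R_{n(j+1)}, j ≥ 0, are pairwise disjoint, and q, Sq, …, S^{n-1}q are pairwise disjoint. -/

import Mathlib

noncomputable section

open Function Set

variable {E : Type*}

/-- `e` is a weak order unit: `e > 0` and `e ⊓ |x| = 0` implies `x = 0`. -/
def WeakOrderUnit [Lattice E] [AddCommGroup E] (e : E) : Prop :=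
  0 < e ∧ ∀ x : E, e ⊓ (x ⊔ -x) = 0 → x = 0

/-- `p` is a component of `q ∈ E₊`: `0 ≤ p ≤ q` and `(q - p) ⊓ p = 0`. -/
def IsComponent [Lattice E] [AddCommGroup E] (q p : E) : Prop :=
  0 ≤ p ∧ p ≤ q ∧ (q - p) ⊓ p = 0

/-- `partialSup f n = ⋁_{j < n} f j`, with the empty supremum equal to `0`. -/
def partialSup [Lattice E] [Zero E] (f : ℕ → E) : ℕ → E
  | 0 => 0
  | n + 1 => partialSup f n ⊔ f n

/-- The band projection of `e` onto the band generated by `g`: `P_g e = ⨆_{m ∈ ℕ} (e ⊓ m•g)`. -/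
def bandProjApp [ConditionallyCompleteLattice E] [AddCommGroup E] (g e : E) : E :=
  ⨆ m : ℕ, e ⊓ m • g

/-- `qComp Sinv e p k = p ⊓ S⁻ᵏp ⊓ (e - ⋁_{j=1}^{k-1} S⁻ʲp)` (empty supremum is `0`). -/
def qComp [Lattice E] [AddCommGroup E] (Sinv : E → E) (e p : E) (k : ℕ) : E :=
  p ⊓ Sinv^[k] p ⊓ (e - partialSup (fun j => Sinv^[j + 1] p) (k - 1))

/-- `(E,T,S,e)` is a conditional expectation preserving system: `E` is a Dedekind complete
Riesz space (typeclass assumptions), `e` is a weak order unit, `T` is a strictly positive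
conditional expectation operator with `Te = e`, and `S` is an order-continuous Riesz
homomorphism with `Se = e` and `TS = T`. -/
structure IsCEPS [ConditionallyCompleteLattice E] [AddCommGroup E] [Module ℝ E]
    (T S : E →ₗ[ℝ] E) (e : E) : Prop where
  unit : WeakOrderUnit e
  T_pos : ∀ f : E, 0 ≤ f → 0 ≤ T f
  T_strictPos : ∀ f : E, 0 ≤ f → T f = 0 → f = 0
  T_proj : ∀ f : E, T (T f) = T f
  T_ordCont : ∀ D : Set E, D.Nonempty → DirectedOn (· ≥ ·) D → IsGLB D 0 →
    IsGLB ((⇑T) '' D) 0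
  T_range_sublattice : ∀ x ∈ Set.range T, ∀ y ∈ Set.range T, x ⊔ y ∈ Set.range T
  T_range_dedekind : ∀ D : Set E, D ⊆ Set.range T → D.Nonempty →
    (∃ b ∈ Set.range T, ∀ x ∈ D, x ≤ b) →
    ∃ s ∈ Set.range T, (∀ x ∈ D, x ≤ s) ∧ ∀ b ∈ Set.range T, (∀ x ∈ D, x ≤ b) → s ≤ b
  T_weakUnit : ∀ u : E, WeakOrderUnit u → WeakOrderUnit (T u)
  Te : T e = e
  S_hom : ∀ x y : E, S (x ⊔ y) = S x ⊔ S y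
  S_ordCont : ∀ D : Set E, D.Nonempty → DirectedOn (· ≥ ·) D → IsGLB D 0 →
    IsGLB ((⇑S) '' D) 0
  Se : S e = e
  TS : ∀ f : E, T (S f) = T f

/-- `E` is `T`-universally complete: every upward directed subset `D` of `E₊` for which
`T '' D` is order bounded in `E` has a supremum in `E`. -/
def TUnivComplete [ConditionallyCompleteLattice E] [AddCommGroup E] [Module ℝ E]
    (T : E →ₗ[ℝ] E) : Prop :=
  ∀ D : Set E, D.Nonempty → D ⊆ {x : E | 0 ≤ x} → DirectedOn (· ≤ ·) D →
    BddAbove ((⇑T) '' D) → BddBelow ((⇑T) '' D) → ∃ s : E, IsLUB D s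

/-- `(S, v)` is aperiodic (with `Sinv` the inverse of `S`): for every `N ∈ ℕ` and every
nonzero component `c` of `v` there exist `k ≥ N` and a component `u` of `c` with
`q(u,k) ≠ 0`. -/
def IsAperiodic [Lattice E] [AddCommGroup E] (Sinv : E → E) (e v : E) : Prop :=
  ∀ N : ℕ, ∀ c : E, IsComponent v c → c ≠ 0 →
    ∃ k : ℕ, N ≤ k ∧ ∃ u : E, IsComponent c u ∧ qComp Sinv e u k ≠ 0

/-- `(S, e)` is periodic (with `Sinv` the inverse of `S`): there is `N ∈ ℕ` such that
`q(c,k) = 0` for all `k ≥ N` and all components `c` of `e` with `0 ≠ c ≠ e`. -/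
def IsPeriodic [Lattice E] [AddCommGroup E] (Sinv : E → E) (e : E) : Prop :=
  ∃ N : ℕ, ∀ c : E, IsComponent e c → c ≠ 0 → c ≠ e → ∀ k : ℕ, N ≤ k → qComp Sinv e c k = 0

/-- `Rk Sinv e p k = ⨆_{i ≥ k} q(p,i)`. -/
def Rk [ConditionallyCompleteLattice E] [AddCommGroup E] (Sinv : E → E) (e p : E)
    (k : ℕ) : E :=
  ⨆ i : ℕ, qComp Sinv e p (k + i)

/-- `towerBase = q = ⨆_{j ≥ 0} S^{nj} R_{n(j+1)}`. -/
def towerBase [ConditionallyCompleteLattice E] [AddCommGroup E] [Module ℝ E]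
    (S : E →ₗ[ℝ] E) (Sinv : E → E) (e p : E) (n : ℕ) : E :=
  ⨆ j : ℕ, (⇑S)^[n * j] (Rk Sinv e p (n * (j + 1)))

section Aux

set_option linter.unusedSectionVars false

variable [ConditionallyCompleteLattice E] [AddCommGroup E]
  [CovariantClass E E (· + ·) (· ≤ ·)]

theorem aux_inf_sup (a b c : E) : a ⊓ (b ⊔ c) = (a ⊓ b) ⊔ (a ⊓ c) := by
  letI := AddCommGroup.toDistribLattice E
  exact inf_sup_left a b c

theorem aux_inf_ciSup (a : E) (f : ℕ → E) (hbdd : BddAbove (Set.range f)) :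
    a ⊓ (⨆ i, f i) = ⨆ i, a ⊓ f i := by
  have hbdd2 : BddAbove (Set.range fun i => a ⊓ f i) :=
    ⟨a, by rintro x ⟨i, rfl⟩; exact inf_le_left⟩
  apply le_antisymm
  · have h1 : ∀ i, f i ≤ (⨆ i, a ⊓ f i) + (a ⊔ ⨆ i, f i) - a := by
      intro i
      have h2 : a ⊓ f i + (a ⊔ f i) = a + f i := inf_add_sup a (f i)
      have h3 : a ⊓ f i ≤ ⨆ i, a ⊓ f i := le_ciSup hbdd2 i
      have h4 : a ⊔ f i ≤ a ⊔ ⨆ i, f i := sup_le_sup_left (le_ciSup hbdd i) a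
      have : a + f i ≤ (⨆ i, a ⊓ f i) + (a ⊔ ⨆ i, f i) := by
        rw [← h2]; exact add_le_add h3 h4
      exact le_sub_iff_add_le'.mpr this
    have h5 : (⨆ i, f i) ≤ (⨆ i, a ⊓ f i) + (a ⊔ ⨆ i, f i) - a := ciSup_le h1
    have h6 : a ⊓ (⨆ i, f i) + (a ⊔ ⨆ i, f i) = a + ⨆ i, f i := inf_add_sup _ _
    calc a ⊓ (⨆ i, f i) = a + (⨆ i, f i) - (a ⊔ ⨆ i, f i) := by rw [← h6]; abel
    _ ≤ ⨆ i, a ⊓ f i := by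
        rw [sub_le_iff_le_add]
        calc a + (⨆ i, f i) ≤ a + ((⨆ i, a ⊓ f i) + (a ⊔ ⨆ i, f i) - a) := add_le_add (le_refl a) h5
        _ = (⨆ i, a ⊓ f i) + (a ⊔ ⨆ i, f i) := by abel
  · exact ciSup_le fun i => inf_le_inf_left a (le_ciSup hbdd i)

theorem aux_disj_mono {a b a' b' : E} (h : a ⊓ b = 0) (ha : a' ≤ a) (hb : b' ≤ b)
    (ha' : 0 ≤ a') (hb' : 0 ≤ b') : a' ⊓ b' = 0 :=
  le_antisymm (h ▸ inf_le_inf ha hb) (le_inf ha' hb')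

theorem comp_zero {e : E} (he : 0 ≤ e) : IsComponent e 0 :=
  ⟨le_refl 0, he, inf_eq_right.mpr (by simpa using he)⟩

theorem IsComponent.compl {e p : E} (h : IsComponent e p) : IsComponent e (e - p) :=
  ⟨sub_nonneg.2 h.2.1, sub_le_self e h.1, by rw [sub_sub_cancel, inf_comm]; exact h.2.2⟩

theorem comp_inf {e p q : E} (hp : IsComponent e p) (hq : IsComponent e q) :
    IsComponent e (p ⊓ q) := by
  refine ⟨le_inf hp.1 hq.1, inf_le_left.trans hp.2.1, ?_⟩
  have h1 : e - p ⊓ q = (e - p) ⊔ (e - q) := sub_inf p q e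
  rw [h1, inf_comm, aux_inf_sup]
  have h2 : p ⊓ q ⊓ (e - p) = 0 :=
    aux_disj_mono (inf_comm (e-p) p ▸ hp.2.2) inf_le_left le_rfl (le_inf hp.1 hq.1)
      (sub_nonneg.2 hp.2.1)
  have h3 : p ⊓ q ⊓ (e - q) = 0 :=
    aux_disj_mono (inf_comm (e-q) q ▸ hq.2.2) inf_le_right le_rfl (le_inf hp.1 hq.1)
      (sub_nonneg.2 hq.2.1)
  rw [h2, h3, sup_idem]

theorem comp_sup {e p q : E} (hp : IsComponent e p) (hq : IsComponent e q) :
    IsComponent e (p ⊔ q) := by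
  refine ⟨hp.1.trans le_sup_left, sup_le hp.2.1 hq.2.1, ?_⟩
  rw [aux_inf_sup]
  have h2 : (e - (p ⊔ q)) ⊓ p = 0 :=
    aux_disj_mono hp.2.2 (sub_le_sub_left le_sup_left e) le_rfl
      (sub_nonneg.2 (sup_le hp.2.1 hq.2.1)) hp.1
  have h3 : (e - (p ⊔ q)) ⊓ q = 0 :=
    aux_disj_mono hq.2.2 (sub_le_sub_left le_sup_right e) le_rfl
      (sub_nonneg.2 (sup_le hp.2.1 hq.2.1)) hq.1
  rw [h2, h3, sup_idem]

theorem comp_partialSup {e : E} (he : 0 ≤ e) (f : ℕ → E) (hf : ∀ i, IsComponent e (f i)) :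
    ∀ N, IsComponent e (partialSup f N)
  | 0 => comp_zero he
  | (N + 1) => comp_sup (comp_partialSup he f hf N) (hf N)

theorem le_partialSup (f : ℕ → E) {j N : ℕ} (h : j < N) : f j ≤ partialSup f N := by
  induction N with
  | zero => omega
  | succ N ih =>
    rcases Nat.lt_succ_iff_lt_or_eq.mp h with h' | rfl
    · exact (ih h').trans le_sup_left
    · exact le_sup_right

theorem partialSup_le {f : ℕ → E} {b : E} (hb : 0 ≤ b) (h : ∀ j, f j ≤ b) :
    ∀ N, partialSup f N ≤ b
  | 0 => hb
  | (N + 1) => sup_le (partialSup_le hb h N) (h N)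

theorem partialSup_monotone (f : ℕ → E) : Monotone (partialSup f) :=
  monotone_nat_of_le_succ fun n => le_sup_left

theorem comp_ciSup {e : E} (f : ℕ → E) (hf : ∀ i, IsComponent e (f i)) :
    IsComponent e (⨆ i, f i) := by
  have hbdd : BddAbove (Set.range f) := ⟨e, by rintro x ⟨i, rfl⟩; exact (hf i).2.1⟩
  have h1 : 0 ≤ ⨆ i, f i := (hf 0).1.trans (le_ciSup hbdd 0)
  have h2 : (⨆ i, f i) ≤ e := ciSup_le fun i => (hf i).2.1
  refine ⟨h1, h2, ?_⟩
  rw [aux_inf_ciSup _ _ hbdd]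
  have : ∀ i, (e - ⨆ i, f i) ⊓ f i = 0 := fun i =>
    aux_disj_mono (hf i).2.2 (sub_le_sub_left (le_ciSup hbdd i) e) le_rfl
      (sub_nonneg.2 h2) (hf i).1
  simp only [this]
  exact ciSup_const

/-- Minimal interface for Riesz endomorphisms fixing `e`. -/
structure AuxHom (e : E) (Φ : E → E) : Prop where
  map_sup : ∀ x y : E, Φ (x ⊔ y) = Φ x ⊔ Φ y
  map_sub : ∀ x y : E, Φ (x - y) = Φ x - Φ y
  map_e : Φ e = e

namespace AuxHom

variable {e : E} {Φ : E → E}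

theorem map_zero (h : AuxHom e Φ) : Φ 0 = 0 := by
  have := h.map_sub e e; simpa using this

theorem mono (h : AuxHom e Φ) : Monotone Φ := fun x y hxy => by
  have : Φ (x ⊔ y) = Φ x ⊔ Φ y := h.map_sup x y
  rw [sup_eq_right.mpr hxy] at this
  exact le_sup_left.trans this.ge

theorem map_add (h : AuxHom e Φ) (x y : E) : Φ (x + y) = Φ x + Φ y := by
  have h1 : x + y = x - (0 - y) := by abel
  rw [h1, h.map_sub, h.map_sub, h.map_zero]
  abel

theorem map_inf (h : AuxHom e Φ) (x y : E) : Φ (x ⊓ y) = Φ x ⊓ Φ y := by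
  have h1 : x ⊓ y = x + y - (x ⊔ y) := by
    rw [← inf_add_sup x y]; abel
  have h2 : Φ x ⊓ Φ y = Φ x + Φ y - (Φ x ⊔ Φ y) := by
    rw [← inf_add_sup (Φ x) (Φ y)]; abel
  rw [h1, h.map_sub, h.map_add, h.map_sup, h2]

theorem map_comp (h : AuxHom e Φ) {c : E} (hc : IsComponent e c) : IsComponent e (Φ c) := by
  refine ⟨h.map_zero ▸ h.mono hc.1, h.map_e ▸ h.mono hc.2.1, ?_⟩
  rw [← h.map_e, ← h.map_sub, ← h.map_inf, hc.2.2, h.map_zero]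

theorem comp' (h1 : AuxHom e Φ) {Ψ : E → E} (h2 : AuxHom e Ψ) : AuxHom e (Φ ∘ Ψ) :=
  ⟨fun x y => by simp [h2.map_sup, h1.map_sup],
   fun x y => by simp [h2.map_sub, h1.map_sub],
   by simp [h2.map_e, h1.map_e]⟩

theorem id' : AuxHom e (id : E → E) := ⟨fun _ _ => rfl, fun _ _ => rfl, rfl⟩

theorem iterate (h : AuxHom e Φ) : ∀ k, AuxHom e (Φ^[k])
  | 0 => id'
  | (k + 1) => by
      rw [Function.iterate_succ]
      exact (h.iterate k).comp' h

end AuxHom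

end Aux

section Aux2

variable [ConditionallyCompleteLattice E] [AddCommGroup E] [Module ℝ E]
  [CovariantClass E E (· + ·) (· ≤ ·)]

theorem aux_map_ciSup (S : E →ₗ[ℝ] E)
    (hoc : ∀ D : Set E, D.Nonempty → DirectedOn (· ≥ ·) D → IsGLB D 0 →
      IsGLB ((⇑S) '' D) 0)
    (hmono : Monotone ⇑S) (g : ℕ → E) (hg : Monotone g) (hbdd : BddAbove (Set.range g)) :
    S (⨆ i, g i) = ⨆ i, S (g i) := by
  have hs : IsLUB (Set.range g) (⨆ i, g i) := isLUB_ciSup hbdd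
  set s := ⨆ i, g i with hsdef
  set D : Set E := Set.range (fun i => s - g i) with hD
  have hne : D.Nonempty := ⟨s - g 0, ⟨0, rfl⟩⟩
  have hdir : DirectedOn (· ≥ ·) D := by
    rintro x ⟨i, rfl⟩ y ⟨j, rfl⟩
    exact ⟨s - g (max i j), ⟨max i j, rfl⟩,
      sub_le_sub_left (hg (le_max_left i j)) s, sub_le_sub_left (hg (le_max_right i j)) s⟩
  have hglb : IsGLB D 0 := by
    constructor
    · rintro x ⟨i, rfl⟩; exact sub_nonneg.2 (hs.1 ⟨i, rfl⟩)
    · intro b hb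
      have : ∀ i, g i ≤ s - b := fun i => by
        have := hb ⟨i, rfl⟩; simpa [le_sub_comm] using this
      have h2 : s ≤ s - b := hs.2 (by rintro x ⟨i, rfl⟩; exact this i)
      exact (add_le_iff_nonpos_left).mp (le_sub_iff_add_le'.mp h2)
  have himg := hoc D hne hdir hglb
  have himg2 : (⇑S) '' D = Set.range (fun i => S s - S (g i)) := by
    have hfe : (⇑S ∘ fun i => s - g i) = fun i => S s - S (g i) := by
      funext i; simp [map_sub]
    rw [hD, ← Set.range_comp, hfe]
  rw [himg2] at himg
  have hlub : IsLUB (Set.range fun i => S (g i)) (S s) := by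
    constructor
    · rintro x ⟨i, rfl⟩
      have := himg.1 ⟨i, rfl⟩
      simpa [sub_nonneg] using this
    · intro b hb
      have hlb : S s - b ∈ lowerBounds (Set.range fun i => S s - S (g i)) := by
        rintro x ⟨i, rfl⟩
        exact sub_le_sub_left (hb ⟨i, rfl⟩) _
      exact sub_nonpos.mp (himg.2 hlb)
  exact (hlub.ciSup_eq).symm

theorem aux_map_iterate_ciSup (S : E →ₗ[ℝ] E)
    (hoc : ∀ D : Set E, D.Nonempty → DirectedOn (· ≥ ·) D → IsGLB D 0 →
      IsGLB ((⇑S) '' D) 0)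
    (hmono : Monotone ⇑S) (g : ℕ → E) (hg : Monotone g) (c : E) (hc : ∀ i, g i ≤ c)
    (m : ℕ) : (⇑S)^[m] (⨆ i, g i) = ⨆ i, (⇑S)^[m] (g i) := by
  induction m with
  | zero => simp
  | succ m ih =>
    have hg' : Monotone fun i => (⇑S)^[m] (g i) := fun i j hij => hmono.iterate m (hg hij)
    have hbdd' : BddAbove (Set.range fun i => (⇑S)^[m] (g i)) :=
      ⟨(⇑S)^[m] c, by rintro x ⟨i, rfl⟩; exact hmono.iterate m (hc i)⟩
    have : (⇑S)^[m + 1] (⨆ i, g i) = S ((⇑S)^[m] (⨆ i, g i)) := Function.iterate_succ_apply' _ _ _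
    rw [this, ih, aux_map_ciSup S hoc hmono _ hg' hbdd']
    congr 1
    funext i
    exact (Function.iterate_succ_apply' _ _ _).symm

end Aux2

/-- Construction of the base of the Kakutani–Rokhlin tower: the suprema defining
`R_k` and `q` exist (the respective families are bounded above by `e`), `q` is a
component of `e`, the elements `S^{nj}R_{n(j+1)}` are pairwise disjoint, and
`q, Sq, …, S^{n-1}q` are pairwise disjoint. -/


theorem tower_base_construction {E : Type*} [ConditionallyCompleteLattice E]
    [AddCommGroup E] [Module ℝ E] [CovariantClass E E (· + ·) (· ≤ ·)] [PosSMulMono ℝ E]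
    (T S : E →ₗ[ℝ] E) (e : E) (hCEPS : IsCEPS T S e)
    (hS : Function.Surjective ⇑S)
    (p : E) (hp : IsComponent e p) (n : ℕ) (hn : 1 ≤ n) :
    (∀ k : ℕ, ∀ i : ℕ, qComp (Function.surjInv hS) e p (k + i) ≤ e) ∧
    (∀ j : ℕ, (⇑S)^[n * j] (Rk (Function.surjInv hS) e p (n * (j + 1))) ≤ e) ∧
    IsComponent e (towerBase S (Function.surjInv hS) e p n) ∧
    (∀ j k : ℕ, j ≠ k →
      (⇑S)^[n * j] (Rk (Function.surjInv hS) e p (n * (j + 1))) ⊓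
        (⇑S)^[n * k] (Rk (Function.surjInv hS) e p (n * (k + 1))) = 0) ∧
    (∀ i j : ℕ, i < n → j < n → i ≠ j →
      (⇑S)^[i] (towerBase S (Function.surjInv hS) e p n) ⊓
        (⇑S)^[j] (towerBase S (Function.surjInv hS) e p n) = 0) := by
  have hSr : Function.LeftInverse ⇑S (Function.surjInv hS) := Function.rightInverse_surjInv hS
  set Sinv := Function.surjInv hS with hSinvdef
  have hSinj : Function.Injective ⇑S := by
    intro x y hxy
    have h0 : S (x - y) = 0 := by rw [map_sub, hxy, sub_self]
    have habs : S ((x - y) ⊔ -(x - y)) = 0 := by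
      rw [hCEPS.S_hom, map_neg, h0, neg_zero, sup_idem]
    have hT : T ((x - y) ⊔ -(x - y)) = 0 := by rw [← hCEPS.TS, habs, map_zero]
    have hnn : 0 ≤ (x - y) ⊔ -(x - y) := by
      have := abs_nonneg (x - y); rwa [abs] at this
    have hz : (x - y) ⊔ -(x - y) = 0 := hCEPS.T_strictPos _ hnn hT
    have h1 : x - y ≤ 0 := le_sup_left.trans hz.le
    have h2 : -(x - y) ≤ 0 := le_sup_right.trans hz.le
    have h3 : x - y = 0 := le_antisymm h1 (by simpa using h2)
    exact sub_eq_zero.mp h3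
  have hS_aux : AuxHom e ⇑S := ⟨hCEPS.S_hom, fun x y => map_sub S x y, hCEPS.Se⟩
  have hSinv_aux : AuxHom e Sinv := by
    refine ⟨fun x y => hSinj ?_, fun x y => hSinj ?_, hSinj ?_⟩
    · rw [hSr, hCEPS.S_hom, hSr, hSr]
    · rw [hSr, map_sub, hSr, hSr]
    · rw [hSr, hCEPS.Se]
  have hIt : ∀ k, AuxHom e ((⇑S)^[k]) := hS_aux.iterate
  have hItInv : ∀ k, AuxHom e (Sinv^[k]) := hSinv_aux.iterate
  have he0 : (0:E) ≤ e := hCEPS.unit.1.le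
  have hq_comp : ∀ k, IsComponent e (qComp Sinv e p k) := by
    intro k
    have h1 : IsComponent e (Sinv^[k] p) := (hItInv k).map_comp hp
    have hP : IsComponent e (partialSup (fun j => Sinv^[j+1] p) (k-1)) :=
      comp_partialSup he0 _ (fun j => (hItInv (j+1)).map_comp hp) _
    simp only [qComp]
    exact comp_inf (comp_inf hp h1) hP.compl
  have hq_le_e : ∀ k, qComp Sinv e p k ≤ e := fun k => (hq_comp k).2.1
  have hq_nonneg : ∀ k, 0 ≤ qComp Sinv e p k := fun k => (hq_comp k).1
  have hq_le_p : ∀ k, qComp Sinv e p k ≤ p := by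
    intro k; simp only [qComp]; exact inf_le_left.trans inf_le_left
  have hRk_comp : ∀ k, IsComponent e (Rk Sinv e p k) := by
    intro k; simp only [Rk]; exact comp_ciSup _ (fun i => hq_comp (k+i))
  have hRk_le_p : ∀ k, Rk Sinv e p k ≤ p := by
    intro k; simp only [Rk]; exact ciSup_le (fun i => hq_le_p (k+i))
  have hkey : ∀ b k, 1 ≤ b → b + 1 ≤ k → Sinv^[b] p ⊓ qComp Sinv e p k = 0 := by
    intro b k hb hbk
    have hPcomp : IsComponent e (partialSup (fun j => Sinv^[j+1] p) (k-1)) :=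
      comp_partialSup he0 _ (fun j => (hItInv (j+1)).map_comp hp) _
    have h1 : Sinv^[b] p ≤ partialSup (fun j => Sinv^[j+1] p) (k-1) := by
      have hb1 : b - 1 < k - 1 := by omega
      have h2 := le_partialSup (fun j => Sinv^[j+1] p) hb1
      simpa [show b - 1 + 1 = b by omega] using h2
    have h2 : partialSup (fun j => Sinv^[j+1] p) (k-1) ⊓
        (e - partialSup (fun j => Sinv^[j+1] p) (k-1)) = 0 := by
      rw [inf_comm]; exact hPcomp.2.2
    have h3 : qComp Sinv e p k ≤ e - partialSup (fun j => Sinv^[j+1] p) (k-1) := by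
      simp only [qComp]; exact inf_le_right
    exact aux_disj_mono h2 h1 h3 ((hItInv b).map_comp hp).1 (hq_nonneg k)
  have hbddq : ∀ c : ℕ, BddAbove (Set.range fun i => qComp Sinv e p (c+i)) :=
    fun c => ⟨e, by rintro x ⟨i, rfl⟩; exact hq_le_e _⟩
  have hdisj1 : ∀ a b c : ℕ, 1 ≤ b → b + 1 ≤ c →
      Rk Sinv e p a ⊓ (⇑S)^[b] (Rk Sinv e p c) = 0 := by
    intro a b c hb hbc
    have hstep1 : Sinv^[b] p ⊓ Rk Sinv e p c = 0 := by
      simp only [Rk]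
      rw [aux_inf_ciSup _ _ (hbddq c)]
      have hz : ∀ i, Sinv^[b] p ⊓ qComp Sinv e p (c+i) = 0 := fun i =>
        hkey b (c+i) hb (by omega)
      simp only [hz]
      exact ciSup_const
    have hstep2 : p ⊓ (⇑S)^[b] (Rk Sinv e p c) = 0 := by
      have h4 := congrArg ((⇑S)^[b]) hstep1
      rw [(hIt b).map_inf, (hIt b).map_zero, hSr.iterate b p] at h4
      exact h4
    exact aux_disj_mono hstep2 (hRk_le_p a) le_rfl (hRk_comp a).1
      ((hIt b).map_comp (hRk_comp c)).1
  have hshift : ∀ u b a c : ℕ, 1 ≤ b → b + 1 ≤ c →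
      (⇑S)^[u] (Rk Sinv e p a) ⊓ (⇑S)^[u + b] (Rk Sinv e p c) = 0 := by
    intro u b a c hb hbc
    have h1 : (⇑S)^[u + b] (Rk Sinv e p c) = (⇑S)^[u] ((⇑S)^[b] (Rk Sinv e p c)) :=
      Function.iterate_add_apply _ u b _
    rw [h1, ← (hIt u).map_inf, hdisj1 a b c hb hbc, (hIt u).map_zero]
  have hx_comp : ∀ j, IsComponent e ((⇑S)^[n * j] (Rk Sinv e p (n * (j + 1)))) :=
    fun j => (hIt (n*j)).map_comp (hRk_comp _)
  have hpair : ∀ j k, j < k → (⇑S)^[n*j] (Rk Sinv e p (n*(j+1))) ⊓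
      (⇑S)^[n*k] (Rk Sinv e p (n*(k+1))) = 0 := by
    intro j k hjk
    obtain ⟨d, rfl⟩ : ∃ d, k = j + (d + 1) := ⟨k - j - 1, by omega⟩
    have hnk : n * (j + (d+1)) = n * j + n * (d+1) := by ring
    rw [hnk]
    apply hshift
    · calc 1 = 1 * 1 := (one_mul 1).symm
        _ ≤ n * (d+1) := Nat.mul_le_mul hn (by omega)
    · have h5 : n * (d+1) ≤ n * (j + (d+1)) := Nat.mul_le_mul_left n (by omega)
      have h6 : n * (j + (d+1) + 1) = n * (j + (d+1)) + n := by ring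
      omega
  have hxx : ∀ m j k, 1 ≤ m → m + 1 ≤ n →
      (⇑S)^[n*j] (Rk Sinv e p (n*(j+1))) ⊓
        (⇑S)^[m] ((⇑S)^[n*k] (Rk Sinv e p (n*(k+1)))) = 0 := by
    intro m j k hm hmn
    have hmk : (⇑S)^[m] ((⇑S)^[n*k] (Rk Sinv e p (n*(k+1)))) =
        (⇑S)^[m + n*k] (Rk Sinv e p (n*(k+1))) :=
      (Function.iterate_add_apply _ m (n*k) _).symm
    rw [hmk]
    rcases le_or_gt j k with hjk | hjk
    · obtain ⟨d, rfl⟩ : ∃ d, k = j + d := ⟨k - j, by omega⟩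
      have h1 : m + n * (j + d) = n*j + (n*d + m) := by ring
      rw [h1]
      apply hshift
      · omega
      · have h5 : n * d ≤ n * (j + d) := Nat.mul_le_mul_left n (by omega)
        have h6 : n * (j + d + 1) = n * (j + d) + n := by ring
        omega
    · obtain ⟨d, rfl⟩ : ∃ d, j = k + (d+1) := ⟨j - k - 1, by omega⟩
      have hnd : n ≤ n * (d+1) := Nat.le_mul_of_pos_right n (by omega)
      obtain ⟨b, hb1, hb2⟩ : ∃ b, n * (d+1) = m + b ∧ 1 ≤ b :=
        ⟨n*(d+1) - m, by omega, by omega⟩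
      have h1 : n * (k + (d+1)) = (m + n*k) + b := by
        have h7 : n*(k+(d+1)) = n*k + n*(d+1) := by ring
        omega
      rw [inf_comm, h1]
      apply hshift
      · exact hb2
      · have h6 : n * (k + (d+1) + 1) = n*k + n*(d+1) + n := by ring
        omega
  have hbddx : BddAbove (Set.range fun j => (⇑S)^[n*j] (Rk Sinv e p (n*(j+1)))) :=
    ⟨e, by rintro x ⟨j, rfl⟩; exact (hx_comp j).2.1⟩
  have hSmono : Monotone ⇑S := hS_aux.mono
  have hPle : ∀ N, partialSup (fun j => (⇑S)^[n*j] (Rk Sinv e p (n*(j+1)))) N ≤ e :=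
    partialSup_le he0 (fun j => (hx_comp j).2.1)
  have hbddP : BddAbove (Set.range (partialSup
      (fun j => (⇑S)^[n*j] (Rk Sinv e p (n*(j+1)))))) :=
    ⟨e, by rintro x ⟨N, rfl⟩; exact hPle N⟩
  have hq_eq : towerBase S Sinv e p n =
      ⨆ N, partialSup (fun j => (⇑S)^[n*j] (Rk Sinv e p (n*(j+1)))) N := by
    simp only [towerBase]
    apply le_antisymm
    · exact ciSup_le fun j => (le_partialSup _ (Nat.lt_succ_self j)).trans (le_ciSup hbddP (j+1))
    · exact ciSup_le fun N => partialSup_le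
        (le_trans (hx_comp 0).1 (le_ciSup hbddx 0)) (fun j => le_ciSup hbddx j) N
  have hSmq : ∀ m, (⇑S)^[m] (towerBase S Sinv e p n) =
      ⨆ N, (⇑S)^[m] (partialSup (fun j => (⇑S)^[n*j] (Rk Sinv e p (n*(j+1)))) N) := by
    intro m
    rw [hq_eq]
    exact aux_map_iterate_ciSup S hCEPS.S_ordCont hSmono _ (partialSup_monotone _) e hPle m
  have hqm : ∀ m, 1 ≤ m → m + 1 ≤ n →
      (⇑S)^[m] (towerBase S Sinv e p n) ⊓ towerBase S Sinv e p n = 0 := by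
    intro m hm hmn
    have hzero : ∀ j N, (⇑S)^[n*j] (Rk Sinv e p (n*(j+1))) ⊓
        (⇑S)^[m] (partialSup (fun j => (⇑S)^[n*j] (Rk Sinv e p (n*(j+1)))) N) = 0 := by
      intro j N
      induction N with
      | zero =>
        have h0 : partialSup (fun j => (⇑S)^[n*j] (Rk Sinv e p (n*(j+1)))) 0 = 0 := rfl
        rw [h0, (hIt m).map_zero]
        exact inf_eq_right.mpr (hx_comp j).1
      | succ N ih =>
        have h0 : partialSup (fun j => (⇑S)^[n*j] (Rk Sinv e p (n*(j+1)))) (N+1) =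
            partialSup (fun j => (⇑S)^[n*j] (Rk Sinv e p (n*(j+1)))) N ⊔
              (⇑S)^[n*N] (Rk Sinv e p (n*(N+1))) := rfl
        rw [h0, (hIt m).map_sup, aux_inf_sup, ih, hxx m j N hm hmn, sup_idem]
    have hbddP' : BddAbove (Set.range fun N =>
        (⇑S)^[m] (partialSup (fun j => (⇑S)^[n*j] (Rk Sinv e p (n*(j+1)))) N)) := by
      refine ⟨e, ?_⟩
      rintro x ⟨N, rfl⟩
      have := (hIt m).mono (hPle N)
      rwa [(hIt m).map_e] at this
    have hterm : ∀ j, (⇑S)^[m] (towerBase S Sinv e p n) ⊓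
        (⇑S)^[n*j] (Rk Sinv e p (n*(j+1))) = 0 := by
      intro j
      have e1 : (⇑S)^[m] (towerBase S Sinv e p n) ⊓ (⇑S)^[n*j] (Rk Sinv e p (n*(j+1))) =
          (⇑S)^[n*j] (Rk Sinv e p (n*(j+1))) ⊓ (⇑S)^[m] (towerBase S Sinv e p n) := inf_comm _ _
      rw [e1, hSmq m, aux_inf_ciSup _ _ hbddP']
      have hfin : (fun N => (⇑S)^[n*j] (Rk Sinv e p (n*(j+1))) ⊓
          (⇑S)^[m] (partialSup (fun j => (⇑S)^[n*j] (Rk Sinv e p (n*(j+1)))) N)) =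
          fun _ => (0:E) := by
        funext N; exact hzero j N
      rw [hfin]
      exact ciSup_const
    have hunfold : towerBase S Sinv e p n = ⨆ j, (⇑S)^[n*j] (Rk Sinv e p (n*(j+1))) := rfl
    conv_lhs => rw [hunfold]
    rw [aux_inf_ciSup _ _ hbddx]
    have hfin2 : (fun j => (⇑S)^[m] (⨆ j, (⇑S)^[n*j] (Rk Sinv e p (n*(j+1)))) ⊓
        (⇑S)^[n*j] (Rk Sinv e p (n*(j+1)))) = fun _ => (0:E) := by
      funext j; exact hterm j
    rw [hfin2]
    exact ciSup_const
  have hmain5 : ∀ i j, i < j → j < n →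
      (⇑S)^[i] (towerBase S Sinv e p n) ⊓ (⇑S)^[j] (towerBase S Sinv e p n) = 0 := by
    intro i j hij hjn
    obtain ⟨d, rfl⟩ : ∃ d, j = i + (d+1) := ⟨j - i - 1, by omega⟩
    have h1 : (⇑S)^[i + (d+1)] (towerBase S Sinv e p n) =
        (⇑S)^[i] ((⇑S)^[d+1] (towerBase S Sinv e p n)) :=
      Function.iterate_add_apply _ i (d+1) _
    rw [h1, ← (hIt i).map_inf, inf_comm (towerBase S Sinv e p n),
      hqm (d+1) (by omega) (by omega), (hIt i).map_zero]
  refine ⟨fun k i => hq_le_e (k+i), fun j => (hx_comp j).2.1, ?_, ?_, ?_⟩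
  · have hunfold : towerBase S Sinv e p n = ⨆ j, (⇑S)^[n*j] (Rk Sinv e p (n*(j+1))) := rfl
    rw [hunfold]
    exact comp_ciSup _ hx_comp
  · intro j k hjk
    rcases lt_or_gt_of_ne hjk with h | h
    · exact hpair j k h
    · rw [inf_comm]; exact hpair k j h
  · intro i j hi hj hij
    rcases lt_or_gt_of_ne hij with h | h
    · exact hmain5 i j h hj
    · rw [inf_comm]; exact hmain5 j i h hi
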